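/- arXiv:2411.13924 — 2 statements merged into one kernel-verified Lean document; each statement's English description precedes it below -/
import Mathlib

section
/- Data-consistency of the identified model set: given noisy data from x(k+1) = A x(k) + B u(k) + H ε(k) + J ϑ(k) + ω(k), where each noise column ω(k) of W₋ lies in a zonotope Z_ω, and given that the stacked matrix [X₋; U₋; E₋; F₋] has full row rank, the true matrix [A B H J] belongs to the set (X₊ − M_ω)·[X₋; U₋; E₋; F₋]^†, where M_ω is the matrix zonotope whose columns range over Z_ω and † denotes the Moore–Penrose pseudoinverse. -/
lemma isUnit_of_rank_eq_card {m : Type*} [Fintype m] [DecidableEq m]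
    (S : Matrix m m ℝ) (h : S.rank = Fintype.card m) : IsUnit S := by
  rw [← Matrix.mulVec_surjective_iff_isUnit]
  have : LinearMap.range S.mulVecLin = ⊤ := by
    apply Submodule.eq_top_of_finrank_eq
    rw [Matrix.rank] at h
    simp [h, Module.finrank_fintype_fun_eq_card]
  intro y
  exact (LinearMap.range_eq_top.mp this) y

/-- A zonotope in `ℝⁿ` with center `c` and generators `g i`. -/
def zonotope {n : ℕ} {ι : Type*} [Fintype ι] (c : Fin n → ℝ) (g : ι → Fin n → ℝ) :
    Set (Fin n → ℝ) :=
  {x | ∃ β : ι → ℝ, (∀ i, |β i| ≤ 1) ∧ x = c + ∑ i, β i • g i}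

/-- The Moore–Penrose pseudoinverse of a full row rank matrix: `M† = Mᵀ (M Mᵀ)⁻¹`. -/
noncomputable def pinv {T : ℕ} {ι : Type*} [Fintype ι] [DecidableEq ι]
    (M : Matrix ι (Fin T) ℝ) : Matrix (Fin T) ι ℝ :=
  M.transpose * (M * M.transpose)⁻¹

/-- Data-consistency of the identified model set: if the data are generated by
`x(k+1) = A x(k) + B u(k) + H ε(k) + J ϑ(k) + ω(k)` with each noise column in the
zonotope `Z_ω`, and the stacked data matrix `M = [X₋; U₋; E₋; F₋]` has full row
rank, then the true matrix `N = [A B H J]` belongs to `(X₊ − M_ω) M†`, i.e. there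
is a noise matrix `W` with all columns in `Z_ω` such that `N = (X₊ − W) M†`. -/
theorem model_set_consistency {n T γ : ℕ}
    (A : Matrix (Fin (2 * n)) (Fin (2 * n)) ℝ)
    (B H J : Fin (2 * n) → ℝ)
    (x ω : ℕ → Fin (2 * n) → ℝ) (u ε ϑ : ℕ → ℝ)
    (cω : Fin (2 * n) → ℝ) (gω : Fin γ → Fin (2 * n) → ℝ)
    -- the system dynamics generating the data
    (hdyn : ∀ k : ℕ, x (k + 1) =
      A.mulVec (x k) + u k • B + ε k • H + ϑ k • J + ω k)
    -- each noise sample lies in the zonotope `Z_ω`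
    (hω : ∀ k : ℕ, ω k ∈ zonotope cω gω)
    -- the stacked data matrix [X₋; U₋; E₋; F₋]
    (M : Matrix (Fin (2 * n) ⊕ Fin 3) (Fin T) ℝ)
    (hM : M = Matrix.of fun (i : Fin (2 * n) ⊕ Fin 3) (k : Fin T) =>
      Sum.elim (fun j => x (k : ℕ) j) (fun r => (![u (k : ℕ), ε (k : ℕ), ϑ (k : ℕ)] : Fin 3 → ℝ) r) i)
    -- full row rank of the stacked data matrix
    (hrank : M.rank = 2 * n + 3)
    -- the shifted state data matrix X₊
    (Xp : Matrix (Fin (2 * n)) (Fin T) ℝ)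
    (hXp : Xp = Matrix.of fun (i : Fin (2 * n)) (k : Fin T) => x ((k : ℕ) + 1) i)
    -- the true system matrix N = [A B H J]
    (N : Matrix (Fin (2 * n)) (Fin (2 * n) ⊕ Fin 3) ℝ)
    (hN : N = Matrix.of fun (i : Fin (2 * n)) (j : Fin (2 * n) ⊕ Fin 3) =>
      Sum.elim (fun j' => A i j') (fun r => (![B i, H i, J i] : Fin 3 → ℝ) r) j) :
    ∃ W : Matrix (Fin (2 * n)) (Fin T) ℝ,
      (∀ k : Fin T, (fun i => W i k) ∈ zonotope cω gω) ∧
      N = (Xp - W) * pinv M := by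
  refine ⟨Matrix.of fun i (k : Fin T) => ω (k : ℕ) i, fun k => hω k, ?_⟩
  set W : Matrix (Fin (2 * n)) (Fin T) ℝ :=
    Matrix.of fun i (k : Fin T) => ω (k : ℕ) i with hW
  have hNM : N * M = Xp - W := by
    ext i k
    have hd := congrFun (hdyn k) i
    simp only [Pi.add_apply, Pi.smul_apply, smul_eq_mul, Matrix.mulVec] at hd
    simp only [hN, hM, hXp, hW, Matrix.mul_apply, Matrix.sub_apply, Matrix.of_apply,
      Fintype.sum_sum_type, Sum.elim_inl, Sum.elim_inr, Fin.sum_univ_three,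
      Matrix.cons_val_zero, Matrix.cons_val_one, Matrix.head_cons,
      Matrix.cons_val_two, Matrix.tail_cons]
    rw [hd]
    simp [dotProduct, mul_comm]
    ring
  have hcard : Fintype.card (Fin (2 * n) ⊕ Fin 3) = 2 * n + 3 := by simp
  have hS : IsUnit (M * M.transpose) := by
    apply isUnit_of_rank_eq_card
    rw [Matrix.rank_self_mul_transpose, hrank, hcard]
  have hSinv : (M * M.transpose) * (M * M.transpose)⁻¹ = 1 :=
    Matrix.mul_nonsing_inv _ ((Matrix.isUnit_iff_isUnit_det _).mp hS)
  calc N = N * ((M * M.transpose) * (M * M.transpose)⁻¹) := by rw [hSinv, Matrix.mul_one]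
    _ = (N * M) * (M.transpose * (M * M.transpose)⁻¹) := by
        simp only [Matrix.mul_assoc]
    _ = (Xp - W) * pinv M := by rw [hNM]; rfl
end

section
/- Pontryagin difference of a box by a zonotope: if X = {x ∈ ℝⁿ : |xᵢ| ≤ mᵢ for all i} and Z = ⟨c,G⟩ is a zonotope with componentwise radius Δg = Σⱼ |g⁽ʲ⁾|, then the box {x : |xᵢ + cᵢ| ≤ mᵢ − Δgᵢ for all i} is contained in the Pontryagin difference X − Z (assuming mᵢ ≥ Δgᵢ). -/
/-- Pontryagin difference of a box by a zonotope: with `X = {x : |xᵢ| ≤ mᵢ}`,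
`Z = ⟨c,G⟩` and `Δgᵢ = Σⱼ |gᵢ⁽ʲ⁾|`, the box `{x : |xᵢ + cᵢ| ≤ mᵢ − Δgᵢ}` is
contained in `X − Z = {x : ∀ z ∈ Z, x + z ∈ X}`. -/
theorem box_pontryagin_diff_zonotope {n γ : ℕ}
    (m : Fin n → ℝ) (c : Fin n → ℝ) (g : Fin γ → Fin n → ℝ)
    (hm : ∀ i, (∑ j, |g j i|) ≤ m i) :
    {x : Fin n → ℝ | ∀ i, |x i + c i| ≤ m i - ∑ j, |g j i|} ⊆
      {x : Fin n → ℝ | ∀ z ∈ zonotope c g, x + z ∈ {y : Fin n → ℝ | ∀ i, |y i| ≤ m i}} := by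
  intro x hx z hz i
  obtain ⟨β, hβ, rfl⟩ := hz
  have h1 : |∑ j, β j * g j i| ≤ ∑ j, |g j i| := by
    calc |∑ j, β j * g j i| ≤ ∑ j, |β j * g j i| := Finset.abs_sum_le_sum_abs _ _
      _ ≤ ∑ j, |g j i| := Finset.sum_le_sum fun j _ => by
          rw [abs_mul]
          nlinarith [hβ j, abs_nonneg (β j), abs_nonneg (g j i)]
  have h2 := hx i
  have : (x + (c + ∑ j, β j • g j)) i = (x i + c i) + ∑ j, β j * g j i := by
    simp [Finset.sum_apply]
    ring
  rw [this]
  calc |(x i + c i) + ∑ j, β j * g j i| ≤ |x i + c i| + |∑ j, β j * g j i| := abs_add_le _ _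
    _ ≤ m i := by linarith
end
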